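/- Let (X, w) be a weighted pure d-dimensional simplicial complex and let i, k ≥ 0 satisfy i + k + 2 ≤ d. Then for all f, g ∈ C^k(X; ℝ): ⟨M_k^+ f, g⟩ = Σ_{σ ∈ X(i)} w(σ) ⟨M_k^+(f|_σ), g|_σ⟩_{X_σ}, where f|_σ ∈ C^k(X_σ; ℝ) is the restriction of f to X_σ(k) ⊆ X(k), M_k^+ on the right-hand side is the non-lazy up-down walk operator of the link X_σ (with the link weights w_σ), and ⟨·,·⟩_{X_σ} is the inner product with respect to w_σ. In other words, restriction respects the non-lazy up-down random walk. -/

import Mathlib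

/-!
Weighted pure simplicial complexes, links, cochains, signless differentials
and high dimensional random walk operators.

Conventions: faces are `Finset`s of vertices. A cochain "of dimension `k`"
(an element of `C^k(X;ℝ)`) is represented by a function `Finset V → ℝ`
evaluated on faces of **cardinality** `c = k + 1`; all operators are indexed
by cardinality.
-/

open Finset

namespace HDRW

noncomputable section

variable {V : Type*} [DecidableEq V] [Fintype V]

/-- A weighted family of faces (the data of a weighted complex or of a link). -/
structure WFam (V : Type*) [DecidableEq V] [Fintype V] where
  faces : Finset (Finset V)
  w : Finset V → ℝ

namespace WFam

/-- The faces of cardinality `c` (i.e. of dimension `c - 1`). -/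
def dimFaces (Y : WFam V) (c : ℕ) : Finset (Finset V) :=
  Y.faces.filter fun σ => σ.card = c

/-- The link of a face `τ`, as a weighted family; the weights are
`w_τ(s) = w (s ∪ τ) / (C(|s| + |τ|, |τ|) * w τ)`. -/
def link (Y : WFam V) (τ : Finset V) : WFam V where
  faces := Finset.univ.powerset.filter fun s => Disjoint s τ ∧ s ∪ τ ∈ Y.faces
  w := fun s => Y.w (s ∪ τ) / (((s.card + τ.card).choose τ.card : ℝ) * Y.w τ)

/-- The inner product of two `c`-cochains: `⟨f, g⟩ = Σ_{σ} w σ * f σ * g σ`. -/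
def inner (Y : WFam V) (c : ℕ) (f g : Finset V → ℝ) : ℝ :=
  ∑ σ ∈ Y.dimFaces c, Y.w σ * (f σ * g σ)

/-- The squared norm `‖f‖² = ⟨f, f⟩` of a `c`-cochain. -/
def norm2 (Y : WFam V) (c : ℕ) (f : Finset V → ℝ) : ℝ := Y.inner c f f

end WFam

/-- The signless differential `d` from cochains on faces of cardinality `c`
(dimension `c-1`) to cochains on faces of cardinality `c+1`:
`(d f)(σ) = (1/(c+1)) Σ_{τ ⊆ σ, |τ| = c} f τ`. -/
def sDiff (c : ℕ) (f : Finset V → ℝ) : Finset V → ℝ :=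
  fun σ => ((c : ℝ) + 1)⁻¹ * ∑ τ ∈ σ.powerset.filter (fun τ => τ.card = c), f τ

/-- Iterated signless differential `C_a → C_{a+n}` (in cardinality indexing),
i.e. `d_{a+n-2} ⋯ d_{a-1}` in dimension indexing. -/
def sDiffIter (a : ℕ) : ℕ → (Finset V → ℝ) → (Finset V → ℝ)
  | 0, f => f
  | n + 1, f => sDiff (a + n) (sDiffIter a n f)

namespace WFam

/-- The adjoint `d^*` of the signless differential, from cochains on faces of
cardinality `c+1` to cochains on faces of cardinality `c`; it is given by the
explicit formula `(d^* f)(τ) = Σ_{σ ∈ X(c), τ ⊆ σ} w_τ(σ ∖ τ) * f σ` (a sum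
over the cardinality-`(c+1)` faces containing `τ`). -/
def sAdj (Y : WFam V) (c : ℕ) (f : Finset V → ℝ) : Finset V → ℝ :=
  fun τ => ∑ σ ∈ (Y.dimFaces (c + 1)).filter (fun σ => τ ⊆ σ),
    (Y.link τ).w (σ \ τ) * f σ

/-- Iterated adjoint of the signless differential, `C_{a+n} → C_a`
(in cardinality indexing), i.e. `d_{a-1}^* ⋯ d_{a+n-2}^*`. -/
def sAdjIter (Y : WFam V) : ℕ → ℕ → (Finset V → ℝ) → (Finset V → ℝ)
  | _, 0, f => f
  | a, n + 1, f => Y.sAdj a (sAdjIter Y (a + 1) n f)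

/-- The non-lazy up-down random walk operator `M⁺` on cochains of cardinality
`c` (dimension `k = c-1`): `(M⁺ f)(σ) = (1/(k+1)) Σ_{τ, σ ∪ τ ∈ X(k+1)} w_σ(τ∖σ) f τ`. -/
def nonLazy (Y : WFam V) (c : ℕ) (f : Finset V → ℝ) : Finset V → ℝ :=
  fun σ => (c : ℝ)⁻¹ *
    ∑ τ ∈ (Y.dimFaces c).filter (fun τ => σ ∪ τ ∈ Y.dimFaces (c + 1)),
      (Y.link σ).w (τ \ σ) * f τ

/-- The (lazy) up-down random walk operator `U` on cochains of cardinality `c`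
(dimension `k = c-1`):
`(U f)(σ) = (1/(k+2)) f σ + (1/(k+2)) Σ_{τ, σ ∪ τ ∈ X(k+1)} w_σ(τ∖σ) f τ`. -/
def upDown (Y : WFam V) (c : ℕ) (f : Finset V → ℝ) : Finset V → ℝ :=
  fun σ => ((c : ℝ) + 1)⁻¹ * f σ + ((c : ℝ) + 1)⁻¹ *
    ∑ τ ∈ (Y.dimFaces c).filter (fun τ => σ ∪ τ ∈ Y.dimFaces (c + 1)),
      (Y.link σ).w (τ \ σ) * f τ

/-- The down-up random walk operator `D` on cochains of cardinality `c`
(dimension `k = c-1`). -/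
def downUp (Y : WFam V) (c : ℕ) (f : Finset V → ℝ) : Finset V → ℝ :=
  fun σ => (c : ℝ)⁻¹ *
      (∑ τ' ∈ σ.powerset.filter (fun τ' => τ'.card = c - 1), (Y.link τ').w (σ \ τ')) * f σ
    + (c : ℝ)⁻¹ *
      ∑ τ ∈ (Y.dimFaces c).filter (fun τ => τ ≠ σ ∧ σ ∩ τ ∈ Y.dimFaces (c - 1)),
        (Y.link (σ ∩ τ)).w (τ \ σ) * f τ

/-- The `i`-down-up operator `D^i = d ⋯ d d^* ⋯ d^*` (going down `i+1` steps and
back up) on cochains of cardinality `c` (dimension `k = c-1`); in dimension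
indexing this is `D_k^i = d_{k-1} ⋯ d_{k-i-1} d_{k-i-1}^* ⋯ d_{k-1}^*`. -/
def downUpIter (Y : WFam V) (c i : ℕ) (f : Finset V → ℝ) : Finset V → ℝ :=
  sDiffIter (c - (i + 1)) (i + 1) (Y.sAdjIter (c - (i + 1)) (i + 1) f)

/-- `Y` (through its 1-skeleton) is a `γ`-(one sided) spectral expander:
every function on the vertices orthogonal to the constants has Rayleigh
quotient of the non-lazy random walk at most `γ` (Rayleigh characterization of
"the second largest eigenvalue of `M₀⁺` is at most `γ`"). -/
def isExpander (Y : WFam V) (γ : ℝ) : Prop :=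
  ∀ f : Finset V → ℝ, Y.inner 1 f (fun _ => 1) = 0 →
    Y.inner 1 (Y.nonLazy 1 f) f ≤ γ * Y.norm2 1 f

/-- `Y` (through its 1-skeleton) is connected: the eigenvalue `1` of the
non-lazy random walk `M₀⁺` has multiplicity one, i.e. every nonzero function on
the vertices orthogonal to the constants has Rayleigh quotient strictly
less than `1`. -/
def isConnected (Y : WFam V) : Prop :=
  ∀ f : Finset V → ℝ, Y.inner 1 f (fun _ => 1) = 0 → Y.norm2 1 f ≠ 0 →
    Y.inner 1 (Y.nonLazy 1 f) f < Y.norm2 1 f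

/-- `f` is an `i`-level cochain of cardinality `c` (dimension `k = c-1`) with
respect to localization: for every face `σ` of cardinality `i` (i.e. of
dimension `i-1`), the localization `f_σ` is orthogonal to the constants in the
link `X_σ`. -/
def isLevel (Y : WFam V) (i c : ℕ) (f : Finset V → ℝ) : Prop :=
  ∀ σ ∈ Y.dimFaces i,
    (Y.link σ).inner (c - i) (fun s => f (σ ∪ s)) (fun _ => 1) = 0

/-- `f` is a proper `i`-level cochain of cardinality `c`: it is an `i`-level
cochain which is in addition orthogonal to every `(i+1)`-level cochain. -/
def isProperLevel (Y : WFam V) (i c : ℕ) (f : Finset V → ℝ) : Prop :=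
  Y.isLevel i c f ∧ ∀ g : Finset V → ℝ, Y.isLevel (i + 1) c g → Y.inner c f g = 0

end WFam

/-- The coboundary operator on oriented cochains (represented by their values
on the increasing ordering of each face, with respect to a linear order on the
vertices): `(δ f)(σ) = Σ_{j} (-1)^j f(σ ∖ {j-th smallest element of σ})`. -/
def coboundary {V : Type*} [LinearOrder V] [Fintype V] (f : Finset V → ℝ) :
    Finset V → ℝ :=
  fun σ => ∑ v ∈ σ, (-1 : ℝ) ^ (σ.filter (fun u => u < v)).card * f (σ.erase v)

/-- A weighted pure `d`-dimensional simplicial complex: a downward closed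
family of faces, each contained in a face of cardinality `d+1`
(dimension `d`), together with a weight function `w : X → (0, 1]` summing to
`1` on the top faces and satisfying the averaging recurrence on lower faces. -/
structure WSC (V : Type*) [DecidableEq V] [Fintype V] (d : ℕ) extends WFam V where
  empty_mem : ∅ ∈ faces
  down_closed : ∀ ⦃σ⦄, σ ∈ faces → ∀ ⦃τ⦄, τ ⊆ σ → τ ∈ faces
  isPure : ∀ σ ∈ faces, ∃ σ' ∈ faces, σ ⊆ σ' ∧ σ'.card = d + 1
  w_pos : ∀ σ ∈ faces, 0 < w σ
  w_le_one : ∀ σ ∈ faces, w σ ≤ 1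
  w_sum_top : ∑ σ ∈ faces.filter (fun σ => σ.card = d + 1), w σ = 1
  w_down : ∀ τ ∈ faces, τ.card ≤ d →
    w τ = (((d + 1).choose τ.card : ℝ))⁻¹ *
      ∑ σ ∈ faces.filter (fun σ => σ.card = d + 1 ∧ τ ⊆ σ), w σ


variable {d : ℕ}

section Statement9Aux

/-- Counting faces between `η` and `σ`. -/
lemma card_between {η σ : Finset V} {m : ℕ} (hησ : η ⊆ σ) (hem : η.card ≤ m) :
    ((σ.powersetCard m).filter (fun ρ => η ⊆ ρ)).card
      = (σ.card - η.card).choose (m - η.card) := by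
  rw [← Finset.card_sdiff_of_subset hησ, ← Finset.card_powersetCard]
  apply Finset.card_nbij' (fun ρ => ρ \ η) (fun s => s ∪ η)
  · intro ρ hρ
    simp only [Finset.mem_coe, Finset.mem_filter, Finset.mem_powersetCard] at hρ ⊢
    exact ⟨Finset.sdiff_subset_sdiff hρ.1.1 (Finset.Subset.refl η),
      by rw [Finset.card_sdiff_of_subset hρ.2, hρ.1.2]⟩
  · intro s hs
    simp only [Finset.mem_coe, Finset.mem_filter, Finset.mem_powersetCard] at hs ⊢
    have hdisj : Disjoint s η := Finset.disjoint_of_subset_left hs.1 Finset.sdiff_disjoint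
    refine ⟨⟨Finset.union_subset (hs.1.trans (Finset.sdiff_subset)) hησ, ?_⟩,
      Finset.subset_union_right⟩
    rw [Finset.card_union_of_disjoint hdisj, hs.2]
    omega
  · intro ρ hρ
    simp only [Finset.mem_coe, Finset.mem_filter, Finset.mem_powersetCard] at hρ
    exact Finset.sdiff_union_of_subset hρ.2
  · intro s hs
    simp only [Finset.mem_coe, Finset.mem_filter, Finset.mem_powersetCard] at hs
    exact Finset.union_sdiff_cancel_right
      (Finset.disjoint_of_subset_left hs.1 Finset.sdiff_disjoint)

/-- The sum of the weights over the `m`-cardinality faces containing a face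
`η` equals `C(m, |η|) * w η`. -/
lemma weight_sum (X : WSC V d) {η : Finset V} (hη : η ∈ X.faces) {m : ℕ}
    (hem : η.card ≤ m) (hmd : m ≤ d + 1) :
    ∑ ρ ∈ X.faces.filter (fun ρ => ρ.card = m ∧ η ⊆ ρ), X.w ρ
      = (m.choose η.card : ℝ) * X.w η := by
  rcases eq_or_lt_of_le hmd with hm | hm
  · -- `m = d + 1`
    subst hm
    rcases eq_or_lt_of_le hem with he | he
    · -- `η` is itself a top face
      have hfilter : X.faces.filter (fun ρ => ρ.card = d + 1 ∧ η ⊆ ρ) = {η} := by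
        ext ρ
        simp only [Finset.mem_filter, Finset.mem_singleton]
        constructor
        · rintro ⟨-, hc, hsub⟩
          exact (Finset.eq_of_subset_of_card_le hsub (by omega)).symm
        · rintro rfl
          exact ⟨hη, he, Finset.Subset.refl _⟩
      rw [hfilter, Finset.sum_singleton, ← he, Nat.choose_self]
      norm_num
    · -- `η` has cardinality at most `d`: use the averaging recurrence
      have hd := X.w_down η hη (by omega)
      rw [hd]
      have hC : (((d + 1).choose η.card : ℝ)) ≠ 0 := by
        exact_mod_cast (Nat.choose_pos (by omega)).ne'
      field_simp
  · -- `m ≤ d`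
    have hmd' : m ≤ d := by omega
    have he : η.card ≤ d := le_trans hem hmd'
    -- expand each `w ρ` via the averaging recurrence
    have step0 :
        ∑ ρ ∈ X.faces.filter (fun ρ => ρ.card = m ∧ η ⊆ ρ), X.w ρ
          = (((d + 1).choose m : ℝ))⁻¹ *
            ∑ ρ ∈ X.faces.filter (fun ρ => ρ.card = m ∧ η ⊆ ρ),
              ∑ σ ∈ X.faces.filter (fun σ => σ.card = d + 1 ∧ ρ ⊆ σ), X.w σ := by
      rw [Finset.mul_sum]
      refine Finset.sum_congr rfl fun ρ hρ => ?_
      simp only [Finset.mem_filter] at hρ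
      rw [X.w_down ρ hρ.1 (by omega), hρ.2.1]
    -- double counting: swap the order of summation
    have step1 :
        ∑ ρ ∈ X.faces.filter (fun ρ => ρ.card = m ∧ η ⊆ ρ),
            ∑ σ ∈ X.faces.filter (fun σ => σ.card = d + 1 ∧ ρ ⊆ σ), X.w σ
          = ∑ σ ∈ X.faces.filter (fun σ => σ.card = d + 1 ∧ η ⊆ σ),
              ∑ ρ ∈ (σ.powersetCard m).filter (fun ρ => η ⊆ ρ), X.w σ := by
      rw [Finset.sum_sigma', Finset.sum_sigma']
      refine Finset.sum_nbij' (fun p => ⟨p.2, p.1⟩) (fun p => ⟨p.2, p.1⟩)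
        ?_ ?_ ?_ ?_ ?_
      · rintro ⟨ρ, σ⟩ hp
        simp only [Finset.mem_sigma, Finset.mem_filter, Finset.mem_powersetCard] at hp ⊢
        obtain ⟨⟨hρf, hρc, hηρ⟩, hσf, hσc, hρσ⟩ := hp
        exact ⟨⟨hσf, hσc, hηρ.trans hρσ⟩, ⟨hρσ, hρc⟩, hηρ⟩
      · rintro ⟨σ, ρ⟩ hp
        simp only [Finset.mem_sigma, Finset.mem_filter, Finset.mem_powersetCard] at hp ⊢
        obtain ⟨⟨hσf, hσc, hησ⟩, ⟨hρσ, hρc⟩, hηρ⟩ := hp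
        exact ⟨⟨X.down_closed hσf hρσ, hρc, hηρ⟩, hσf, hσc, hρσ⟩
      · rintro ⟨ρ, σ⟩ _; rfl
      · rintro ⟨σ, ρ⟩ _; rfl
      · rintro ⟨ρ, σ⟩ _; rfl
    -- the inner sums are constant
    have step2 :
        ∑ σ ∈ X.faces.filter (fun σ => σ.card = d + 1 ∧ η ⊆ σ),
            ∑ ρ ∈ (σ.powersetCard m).filter (fun ρ => η ⊆ ρ), X.w σ
          = (((d + 1) - η.card).choose (m - η.card) : ℝ) *
              ∑ σ ∈ X.faces.filter (fun σ => σ.card = d + 1 ∧ η ⊆ σ), X.w σ := by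
      rw [Finset.mul_sum]
      refine Finset.sum_congr rfl fun σ hσ => ?_
      simp only [Finset.mem_filter] at hσ
      rw [Finset.sum_const, card_between hσ.2.2 hem, hσ.2.1, nsmul_eq_mul]
    rw [step0, step1, step2, X.w_down η hη he]
    have h1 : ((d + 1).choose m : ℝ) ≠ 0 := by
      exact_mod_cast (Nat.choose_pos (by omega)).ne'
    have h2 : ((d + 1).choose η.card : ℝ) ≠ 0 := by
      exact_mod_cast (Nat.choose_pos (by omega)).ne'
    have key : (d + 1).choose m * (m.choose η.card) =
        (d + 1).choose η.card * ((d + 1 - η.card).choose (m - η.card)) :=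
      Nat.choose_mul hem
    have keyR : ((d + 1).choose m : ℝ) * (m.choose η.card)
        = ((d + 1).choose η.card : ℝ) * ((d + 1 - η.card).choose (m - η.card)) := by
      exact_mod_cast key
    have key' : (((d + 1).choose m : ℝ))⁻¹ * (((d + 1) - η.card).choose (m - η.card) : ℝ)
        = (m.choose η.card : ℝ) * (((d + 1).choose η.card : ℝ))⁻¹ := by
      field_simp
      linear_combination -keyR
    rw [← mul_assoc, ← mul_assoc, key']

/-- The inner sum over unordered pairs of `c`-subsets with union `η`. -/
def pairSum (f g : Finset V → ℝ) (c : ℕ) (η : Finset V) : ℝ :=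
  ∑ p ∈ ((η.powersetCard c) ×ˢ (η.powersetCard c)).filter
      (fun p => p.1 ∪ p.2 = η), f p.2 * g p.1

/-- Generic expansion of `⟨M⁺ f, g⟩` as a sum over `(c+1)`-cardinality faces,
valid for any weighted family with nonvanishing weights which is downward
closed from cardinality `c+1` to cardinality `c`. -/
lemma inner_nonLazy_expand (Y : WFam V) (c : ℕ) (hc : 1 ≤ c)
    (hpos : ∀ σ ∈ Y.dimFaces c, Y.w σ ≠ 0)
    (hdown : ∀ η ∈ Y.dimFaces (c + 1), ∀ τ ⊆ η, τ.card = c → τ ∈ Y.faces)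
    (f g : Finset V → ℝ) :
    Y.inner c (Y.nonLazy c f) g
      = (c : ℝ)⁻¹ * ((c : ℝ) + 1)⁻¹ *
          ∑ η ∈ Y.dimFaces (c + 1), Y.w η * pairSum f g c η := by
  unfold WFam.inner WFam.nonLazy
  have step1 :
      ∑ σ ∈ Y.dimFaces c, Y.w σ *
          (((c : ℝ)⁻¹ * ∑ τ ∈ (Y.dimFaces c).filter
              (fun τ => σ ∪ τ ∈ Y.dimFaces (c + 1)),
            (Y.link σ).w (τ \ σ) * f τ) * g σ)
        = (c : ℝ)⁻¹ * ((c : ℝ) + 1)⁻¹ *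
            ∑ σ ∈ Y.dimFaces c,
              ∑ τ ∈ (Y.dimFaces c).filter (fun τ => σ ∪ τ ∈ Y.dimFaces (c + 1)),
                Y.w (σ ∪ τ) * (f τ * g σ) := by
    conv_rhs => rw [Finset.mul_sum]
    refine Finset.sum_congr rfl fun σ hσ => ?_
    simp only [Finset.mul_sum, Finset.sum_mul]
    refine Finset.sum_congr rfl fun τ hτ => ?_
    simp only [WFam.dimFaces, Finset.mem_filter] at hσ hτ
    obtain ⟨hσf, hσc⟩ := hσ
    obtain ⟨⟨hτf, hτc⟩, hufaces, hucard⟩ := hτ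
    have hwσ : Y.w σ ≠ 0 := hpos σ (by simp [WFam.dimFaces, Finset.mem_filter, hσf, hσc])
    have hsub : σ ⊆ σ ∪ τ := Finset.subset_union_left
    have hcard : (τ \ σ).card = 1 := by
      have : τ \ σ = (σ ∪ τ) \ σ := (Finset.union_sdiff_left σ τ).symm
      rw [this, Finset.card_sdiff_of_subset hsub, hucard, hσc]
      omega
    have hun : τ \ σ ∪ σ = σ ∪ τ := by
      rw [Finset.sdiff_union_self_eq_union, Finset.union_comm]
    unfold WFam.link
    simp only [hcard, hun, hσc]
    have hch : ((1 + c).choose c : ℝ) = (c : ℝ) + 1 := by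
      rw [Nat.add_comm 1 c, Nat.choose_succ_self_right]
      push_cast
      ring
    rw [hch]
    have hc1 : (c : ℝ) + 1 ≠ 0 := by positivity
    have hc0 : (c : ℝ) ≠ 0 := Nat.cast_ne_zero.mpr (by omega)
    field_simp [hwσ, hc0]
  rw [step1]
  congr 1
  simp only [pairSum, Finset.mul_sum]
  rw [Finset.sum_sigma', Finset.sum_sigma']
  refine Finset.sum_nbij' (fun q => ⟨q.1 ∪ q.2, (q.1, q.2)⟩)
    (fun q => ⟨q.2.1, q.2.2⟩) ?_ ?_ ?_ ?_ ?_
  · rintro ⟨σ, τ⟩ hp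
    simp only [Finset.mem_sigma, Finset.mem_filter, WFam.dimFaces,
      Finset.mem_powersetCard, Finset.mem_product] at hp ⊢
    obtain ⟨⟨hσf, hσc⟩, ⟨hτf, hτc⟩, huf, huc⟩ := hp
    exact ⟨⟨huf, huc⟩, ⟨⟨Finset.subset_union_left, hσc⟩,
      ⟨Finset.subset_union_right, hτc⟩⟩, trivial⟩
  · rintro ⟨η, σ, τ⟩ hp
    simp only [Finset.mem_sigma, Finset.mem_filter, WFam.dimFaces,
      Finset.mem_powersetCard, Finset.mem_product] at hp ⊢
    obtain ⟨⟨hηf, hηc⟩, ⟨⟨hση, hσc⟩, ⟨hτη, hτc⟩⟩, huη⟩ := hp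
    have hηd : η ∈ Y.dimFaces (c + 1) := by
      simp [WFam.dimFaces, Finset.mem_filter, hηf, hηc]
    refine ⟨⟨hdown η hηd σ hση hσc, hσc⟩, ⟨hdown η hηd τ hτη hτc, hτc⟩, ?_, ?_⟩
    · rw [huη]; exact hηf
    · rw [huη]; exact hηc
  · rintro ⟨σ, τ⟩ _; rfl
  · rintro ⟨η, σ, τ⟩ hp
    simp only [Finset.mem_sigma, Finset.mem_filter, Finset.mem_product] at hp
    obtain ⟨-, -, huη⟩ := hp
    subst huη
    rfl
  · rintro ⟨σ, τ⟩ _; rfl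

end Statement9Aux

/-- For `i, k ≥ 0` with `i + k + 2 ≤ d` (here `a = i + 1`,
`c = k + 1`, so `a + c ≤ d`) and all `f, g ∈ C^k(X;ℝ)`:
`⟨M_k^+ f, g⟩ = Σ_{σ ∈ X(i)} w σ ⟨M_k^+(f|_σ), g|_σ⟩_{X_σ}`, where `f|_σ` is
the restriction of `f` to the link faces and `M_k^+` on the right-hand side is
the non-lazy up-down walk operator of the link `X_σ` (with the link weights
`w_σ`); i.e. restriction respects the non-lazy up-down random walk. -/
theorem nonLazy_respects_restriction (X : WSC V d) (a c : ℕ) (ha : 1 ≤ a)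
    (hc1 : 1 ≤ c) (h : a + c ≤ d) (f g : Finset V → ℝ) :
    X.toWFam.inner c (X.toWFam.nonLazy c f) g =
      ∑ σ ∈ X.toWFam.dimFaces a,
        X.toWFam.w σ * (X.toWFam.link σ).inner c ((X.toWFam.link σ).nonLazy c f) g := by
  classical
  have hposX : ∀ σ ∈ X.toWFam.dimFaces c, X.toWFam.w σ ≠ 0 := by
    intro σ hσ
    simp only [WFam.dimFaces, Finset.mem_filter] at hσ
    exact (X.w_pos σ hσ.1).ne'
  have hdownX : ∀ η ∈ X.toWFam.dimFaces (c + 1), ∀ τ ⊆ η, τ.card = c →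
      τ ∈ X.toWFam.faces := by
    intro η hη τ hτη _
    simp only [WFam.dimFaces, Finset.mem_filter] at hη
    exact X.down_closed hη.1 hτη
  rw [inner_nonLazy_expand _ c hc1 hposX hdownX f g]
  have hnum : ((a + c + 1).choose (c + 1) : ℝ) ≠ 0 := by
    exact_mod_cast (Nat.choose_pos (by omega)).ne'
  have hCC : (c + 1 + a).choose a = (a + c + 1).choose (c + 1) := by
    have h2 := Nat.choose_symm (n := a + c + 1) (k := a) (by omega)
    rw [show a + c + 1 - a = c + 1 by omega] at h2
    rw [show c + 1 + a = a + c + 1 by omega, ← h2]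
  -- rewrite each link inner product via the generic expansion
  have hlink : ∀ σ ∈ X.toWFam.dimFaces a,
      X.toWFam.w σ * (X.toWFam.link σ).inner c ((X.toWFam.link σ).nonLazy c f) g
        = (c : ℝ)⁻¹ * ((c : ℝ) + 1)⁻¹ *
            ∑ η ∈ (X.toWFam.link σ).dimFaces (c + 1),
              (((a + c + 1).choose (c + 1) : ℝ))⁻¹ *
                (X.toWFam.w (η ∪ σ) * pairSum f g c η) := by
    intro σ hσ
    simp only [WFam.dimFaces, Finset.mem_filter] at hσ
    obtain ⟨hσf, hσc⟩ := hσ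
    have hwσ : X.toWFam.w σ ≠ 0 := (X.w_pos σ hσf).ne'
    have hposL : ∀ τ ∈ (X.toWFam.link σ).dimFaces c, (X.toWFam.link σ).w τ ≠ 0 := by
      intro τ hτ
      simp only [WFam.dimFaces, WFam.link, Finset.mem_filter, Finset.mem_powerset] at hτ
      obtain ⟨⟨-, hdisj, hm⟩, hτc⟩ := hτ
      have h1 : 0 < X.toWFam.w (τ ∪ σ) := X.w_pos _ hm
      have h2 : 0 < X.toWFam.w σ := X.w_pos _ hσf
      have h3 : (0 : ℝ) < ((τ.card + σ.card).choose σ.card : ℝ) := by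
        exact_mod_cast Nat.choose_pos (by omega)
      exact ne_of_gt (div_pos h1 (mul_pos h3 h2))
    have hdownL : ∀ η ∈ (X.toWFam.link σ).dimFaces (c + 1), ∀ τ ⊆ η, τ.card = c →
        τ ∈ (X.toWFam.link σ).faces := by
      intro η hη τ hτη _
      simp only [WFam.dimFaces, WFam.link, Finset.mem_filter, Finset.mem_powerset] at hη ⊢
      obtain ⟨⟨-, hdisj, hm⟩, hηc⟩ := hη
      exact ⟨Finset.subset_univ τ, Finset.disjoint_of_subset_left hτη hdisj,
        X.down_closed hm (Finset.union_subset_union hτη (Finset.Subset.refl σ))⟩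
    rw [inner_nonLazy_expand _ c hc1 hposL hdownL f g, mul_left_comm]
    congr 1
    rw [Finset.mul_sum]
    refine Finset.sum_congr rfl fun η hη => ?_
    simp only [WFam.dimFaces, WFam.link, Finset.mem_filter, Finset.mem_powerset] at hη
    obtain ⟨⟨-, hdisj, hm⟩, hηc⟩ := hη
    show X.toWFam.w σ *
        (X.toWFam.w (η ∪ σ) / (((η.card + σ.card).choose σ.card : ℝ) * X.toWFam.w σ)
          * pairSum f g c η) = _
    rw [hηc, hσc, hCC]
    field_simp
  rw [Finset.sum_congr rfl hlink, ← Finset.mul_sum]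
  congr 1
  -- reindex the double sum over (σ, η) by ρ = η ∪ σ
  have bij :
      ∑ σ ∈ X.toWFam.dimFaces a, ∑ η ∈ (X.toWFam.link σ).dimFaces (c + 1),
          (((a + c + 1).choose (c + 1) : ℝ))⁻¹ * (X.toWFam.w (η ∪ σ) * pairSum f g c η)
        = ∑ ρ ∈ X.toWFam.dimFaces (a + c + 1), ∑ η ∈ ρ.powersetCard (c + 1),
            (((a + c + 1).choose (c + 1) : ℝ))⁻¹ * (X.toWFam.w ρ * pairSum f g c η) := by
    rw [Finset.sum_sigma', Finset.sum_sigma']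
    refine Finset.sum_nbij' (fun q => ⟨q.2 ∪ q.1, q.2⟩) (fun q => ⟨q.1 \ q.2, q.2⟩)
      ?_ ?_ ?_ ?_ ?_
    · rintro ⟨σ, η⟩ hp
      simp only [Finset.mem_sigma, WFam.dimFaces, WFam.link, Finset.mem_filter,
        Finset.mem_powerset, Finset.mem_powersetCard] at hp ⊢
      obtain ⟨⟨hσf, hσc⟩, ⟨-, hdisj, hm⟩, hηc⟩ := hp
      refine ⟨⟨hm, ?_⟩, Finset.subset_union_left, hηc⟩
      rw [Finset.card_union_of_disjoint hdisj, hηc, hσc]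
      omega
    · rintro ⟨ρ, η⟩ hp
      simp only [Finset.mem_sigma, WFam.dimFaces, WFam.link, Finset.mem_filter,
        Finset.mem_powerset, Finset.mem_powersetCard] at hp ⊢
      obtain ⟨⟨hρf, hρc⟩, hηρ, hηc⟩ := hp
      have hun : η ∪ ρ \ η = ρ := Finset.union_sdiff_of_subset hηρ
      refine ⟨⟨X.down_closed hρf (Finset.sdiff_subset), ?_⟩,
        ⟨Finset.subset_univ η, Finset.sdiff_disjoint.symm, ?_⟩, hηc⟩
      · rw [Finset.card_sdiff_of_subset hηρ, hρc, hηc]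
        omega
      · rw [hun]; exact hρf
    · rintro ⟨σ, η⟩ hp
      simp only [Finset.mem_sigma, WFam.dimFaces, WFam.link, Finset.mem_filter,
        Finset.mem_powerset] at hp
      obtain ⟨-, ⟨-, hdisj, -⟩, -⟩ := hp
      show (⟨(η ∪ σ) \ η, η⟩ : Σ _ : Finset V, Finset V) = ⟨σ, η⟩
      rw [Finset.union_sdiff_cancel_left hdisj]
    · rintro ⟨ρ, η⟩ hp
      simp only [Finset.mem_sigma, WFam.dimFaces, Finset.mem_filter,
        Finset.mem_powersetCard] at hp
      obtain ⟨-, hηρ, -⟩ := hp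
      show (⟨η ∪ ρ \ η, η⟩ : Σ _ : Finset V, Finset V) = ⟨ρ, η⟩
      rw [Finset.union_sdiff_of_subset hηρ]
    · rintro ⟨σ, η⟩ _; rfl
  -- swap the order of summation
  have swap :
      ∑ ρ ∈ X.toWFam.dimFaces (a + c + 1), ∑ η ∈ ρ.powersetCard (c + 1),
          (((a + c + 1).choose (c + 1) : ℝ))⁻¹ * (X.toWFam.w ρ * pairSum f g c η)
        = ∑ η ∈ X.toWFam.dimFaces (c + 1),
            ∑ ρ ∈ (X.toWFam.dimFaces (a + c + 1)).filter (fun ρ => η ⊆ ρ),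
              (((a + c + 1).choose (c + 1) : ℝ))⁻¹ * (X.toWFam.w ρ * pairSum f g c η) := by
    rw [Finset.sum_sigma', Finset.sum_sigma']
    refine Finset.sum_nbij' (fun q => ⟨q.2, q.1⟩) (fun q => ⟨q.2, q.1⟩)
      ?_ ?_ ?_ ?_ ?_
    · rintro ⟨ρ, η⟩ hp
      simp only [Finset.mem_sigma, WFam.dimFaces, Finset.mem_filter,
        Finset.mem_powersetCard] at hp ⊢
      obtain ⟨⟨hρf, hρc⟩, hηρ, hηc⟩ := hp
      exact ⟨⟨X.down_closed hρf hηρ, hηc⟩, ⟨hρf, hρc⟩, hηρ⟩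
    · rintro ⟨η, ρ⟩ hp
      simp only [Finset.mem_sigma, WFam.dimFaces, Finset.mem_filter,
        Finset.mem_powersetCard] at hp ⊢
      obtain ⟨⟨hηf, hηc⟩, ⟨hρf, hρc⟩, hηρ⟩ := hp
      exact ⟨⟨hρf, hρc⟩, hηρ, hηc⟩
    · rintro ⟨ρ, η⟩ _; rfl
    · rintro ⟨η, ρ⟩ _; rfl
    · rintro ⟨ρ, η⟩ _; rfl
  rw [bij, swap]
  refine (Finset.sum_congr rfl fun η hη => ?_).symm
  simp only [WFam.dimFaces, Finset.mem_filter] at hη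
  obtain ⟨hηf, hηc⟩ := hη
  have hfil : (X.toWFam.dimFaces (a + c + 1)).filter (fun ρ => η ⊆ ρ)
      = X.faces.filter (fun ρ => ρ.card = a + c + 1 ∧ η ⊆ ρ) := by
    rw [WFam.dimFaces, Finset.filter_filter]
  have hws := weight_sum X hηf (m := a + c + 1) (by omega) (by omega)
  rw [hηc] at hws
  calc ∑ ρ ∈ (X.toWFam.dimFaces (a + c + 1)).filter (fun ρ => η ⊆ ρ),
        (((a + c + 1).choose (c + 1) : ℝ))⁻¹ * (X.toWFam.w ρ * pairSum f g c η)
      = (((a + c + 1).choose (c + 1) : ℝ))⁻¹ *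
          ((∑ ρ ∈ X.faces.filter (fun ρ => ρ.card = a + c + 1 ∧ η ⊆ ρ), X.toWFam.w ρ)
            * pairSum f g c η) := by
        rw [hfil, Finset.sum_mul, Finset.mul_sum]
    _ = X.toWFam.w η * pairSum f g c η := by
        rw [hws, ← mul_assoc, ← mul_assoc, inv_mul_cancel₀ hnum, one_mul]

end

end HDRW
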